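/- Let G = (V, E) be a finite connected graph with N vertices and let ε ∈ (0,1]. If W ⊆ V is a clique of maximum cardinality ω(G) and π(G) denotes the subgraph of G induced by the vertex set V ∖ W, then μ_ε(G) ≤ min(ω(G), ⌈ε⁻¹⌉) + μ_ε(π(G)), where ⌈a⌉ denotes the least integer not less than a. -/
import Mathlib


open Set

/-- A configuration `η` is `ε`-stable for the graph `G` if along every edge the
opinions either agree or differ by more than `ε`. -/
def IsStable {V : Type*} (G : SimpleGraph V) (ε : ℝ) (η : V → ℝ) : Prop :=
  ∀ ⦃x y : V⦄, G.Adj x y → η x = η y ∨ ε < |η x - η y|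

/-- The `ε`-opinion index of `G`: the maximum number of distinct opinions taken
by an `ε`-stable configuration `η : V → [0,1]`. -/
noncomputable def opinionIndex {V : Type*} (G : SimpleGraph V) (ε : ℝ) : ℕ :=
  sSup {n : ℕ | ∃ η : V → ℝ,
    (∀ x, η x ∈ Set.Icc (0 : ℝ) 1) ∧ IsStable G ε η ∧ (Set.range η).ncard = n}

/-- A finite set of points of `[0,1]` that are pairwise more than `ε` apart has
at most `⌈ε⁻¹⌉₊` elements. -/
lemma sep_card_le {ε : ℝ} (hε0 : 0 < ε) (hε1 : ε ≤ 1) (s : Finset ℝ)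
    (hsub : ∀ a ∈ s, a ∈ Set.Icc (0 : ℝ) 1)
    (hsep : ∀ a ∈ s, ∀ b ∈ s, a ≠ b → ε < |a - b|) :
    s.card ≤ ⌈ε⁻¹⌉₊ := by
  have hceil1 : 1 ≤ ⌈ε⁻¹⌉₊ := Nat.one_le_ceil_iff.mpr (by positivity)
  rcases le_or_gt s.card 1 with h1 | h2
  · exact h1.trans hceil1
  -- s.card ≥ 2
  set k := s.card with hk
  have hk2 : 2 ≤ k := h2
  let f : Fin k ≃o s := s.orderIsoOfFin rfl
  let m : Fin k → ℝ := fun i => (f i : ℝ)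
  have hmem : ∀ i, m i ∈ s := fun i => (f i).2
  have hmono : StrictMono m := fun i j hij => by
    exact_mod_cast f.strictMono hij
  have hstep : ∀ (n : ℕ) (h : n + 1 < k), m ⟨n, Nat.lt_of_succ_lt h⟩ + ε < m ⟨n + 1, h⟩ := by
    intro n h
    have hlt : m ⟨n, Nat.lt_of_succ_lt h⟩ < m ⟨n + 1, h⟩ :=
      hmono (by simp [Fin.lt_def])
    have hne : m ⟨n + 1, h⟩ ≠ m ⟨n, Nat.lt_of_succ_lt h⟩ := hlt.ne'
    have := hsep _ (hmem _) _ (hmem _) hne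
    rw [abs_of_pos (by linarith)] at this
    linarith
  have h0k : 0 < k := by omega
  have key : ∀ (n : ℕ) (h : n + 1 < k), ((n : ℝ) + 1) * ε < m ⟨n + 1, h⟩ - m ⟨0, h0k⟩ := by
    intro n
    induction n with
    | zero =>
      intro h
      have h1 := hstep 0 h
      have he : m ⟨0, Nat.lt_of_succ_lt h⟩ = m ⟨0, h0k⟩ := rfl
      rw [he] at h1
      push_cast
      linarith
    | succ p ih =>
      intro h
      have hp : p + 1 < k := Nat.lt_of_succ_lt h
      have h1 := ih hp
      have h2 := hstep (p + 1) h
      have he : m ⟨p + 1, Nat.lt_of_succ_lt h⟩ = m ⟨p + 1, hp⟩ := rfl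
      rw [he] at h2
      push_cast
      push_cast at h1
      linarith
  have hlast : k - 1 - 1 + 1 < k := by omega
  have hkey := key (k - 1 - 1) hlast
  have hub : m ⟨k - 1 - 1 + 1, hlast⟩ ≤ 1 := (hsub _ (hmem _)).2
  have hlb : 0 ≤ m ⟨0, h0k⟩ := (hsub _ (hmem _)).1
  have he2 : k - 1 - 1 + 2 = k := by omega
  have hcast : ((k - 1 - 1 : ℕ) : ℝ) = (k : ℝ) - 2 := by
    have h := congrArg (fun n : ℕ => (n : ℝ)) he2
    push_cast at h
    linarith
  rw [hcast] at hkey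
  have hklt : ((k : ℝ) - 1) * ε < 1 := by nlinarith
  have h3 : (k : ℝ) - 1 < ε⁻¹ := by
    rw [inv_eq_one_div, lt_div_iff₀ hε0]
    linarith
  have h4 : (k : ℝ) - 1 < (⌈ε⁻¹⌉₊ : ℝ) := h3.trans_le (Nat.le_ceil _)
  have h5 : (k : ℝ) < (⌈ε⁻¹⌉₊ : ℝ) + 1 := by linarith
  have h6 : k < ⌈ε⁻¹⌉₊ + 1 := by exact_mod_cast h5
  omega

theorem stmt2 {V : Type*} [Fintype V] [DecidableEq V] (G : SimpleGraph V)
    (hG : G.Connected) (ε : ℝ) (hε0 : 0 < ε) (hε1 : ε ≤ 1)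
    (W : Finset V) (hW : G.IsClique (W : Set V))
    (hmax : ∀ W' : Finset V, G.IsClique (W' : Set V) → W'.card ≤ W.card) :
    opinionIndex G ε ≤
      min W.card ⌈ε⁻¹⌉₊ + opinionIndex (G.induce {x : V | x ∉ W}) ε := by
  apply csSup_le'
  rintro n ⟨η, hicc, hstab, hn⟩
  subst hn
  -- split the range
  have hsplit : Set.range η ⊆ η '' (W : Set V) ∪ η '' {x : V | x ∉ W} := by
    rintro - ⟨x, rfl⟩
    by_cases hx : x ∈ W
    · exact Or.inl ⟨x, hx, rfl⟩
    · exact Or.inr ⟨x, hx, rfl⟩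
  have hfin1 : (η '' (W : Set V)).Finite := (W.finite_toSet).image η
  have hfin2 : (η '' {x : V | x ∉ W}).Finite := (Set.toFinite _).image η
  have hle : (Set.range η).ncard ≤
      (η '' (W : Set V)).ncard + (η '' {x : V | x ∉ W}).ncard := by
    calc (Set.range η).ncard ≤ (η '' (W : Set V) ∪ η '' {x : V | x ∉ W}).ncard :=
          Set.ncard_le_ncard hsplit (hfin1.union hfin2)
      _ ≤ _ := Set.ncard_union_le _ _
  refine hle.trans (Nat.add_le_add ?_ ?_)
  · -- clique part
    refine le_min ?_ ?_
    · calc (η '' (W : Set V)).ncard ≤ (W : Set V).ncard := Set.ncard_image_le (W.finite_toSet)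
        _ = W.card := by simp [Set.ncard_coe_finset]
    · -- separation bound
      have : (hfin1.toFinset).card ≤ ⌈ε⁻¹⌉₊ := by
        apply sep_card_le hε0 hε1
        · intro a ha
          rw [Set.Finite.mem_toFinset] at ha
          obtain ⟨x, -, rfl⟩ := ha
          exact hicc x
        · intro a ha b hb hab
          rw [Set.Finite.mem_toFinset] at ha hb
          obtain ⟨x, hx, rfl⟩ := ha
          obtain ⟨y, hy, rfl⟩ := hb
          have hxy : x ≠ y := fun h => hab (by rw [h])
          have hadj : G.Adj x y := hW hx hy hxy
          rcases hstab hadj with h | h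
          · exact absurd h hab
          · exact h
      rwa [← Set.ncard_eq_toFinset_card _ hfin1] at this
  · -- induced part
    have hmem : (η '' {x : V | x ∉ W}).ncard ∈ {n : ℕ | ∃ η' : ({x : V | x ∉ W} : Set V) → ℝ,
        (∀ x, η' x ∈ Set.Icc (0 : ℝ) 1) ∧ IsStable (G.induce {x : V | x ∉ W}) ε η' ∧
        (Set.range η').ncard = n} := by
      refine ⟨fun x => η x.1, fun x => hicc x.1, ?_, ?_⟩
      · intro x y hxy
        exact hstab hxy
      · show (Set.range fun x : ({x : V | x ∉ W} : Set V) => η x.1).ncard = _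
        rw [show (fun x : ({x : V | x ∉ W} : Set V) => η x.1) = η ∘ Subtype.val from rfl,
          Set.range_comp, Subtype.range_coe]
    refine le_csSup ?_ hmem
    refine ⟨Fintype.card ({x : V | x ∉ W} : Set V), ?_⟩
    rintro x ⟨η', -, -, rfl⟩
    calc (Set.range η').ncard = (η' '' Set.univ).ncard := by rw [Set.image_univ]
      _ ≤ (Set.univ : Set ({x : V | x ∉ W} : Set V)).ncard := Set.ncard_image_le Set.finite_univ
      _ = Fintype.card _ := by rw [Set.ncard_univ, Nat.card_eq_fintype_card]
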